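/- Let $M,N$ be dual lattices with $\deg\in M$, $\deg^{\vee}\in N$ and finite sets $\Delta\subset M$, $\Delta^{\vee}\subset N$ satisfying $m\cdot\deg^{\vee}=1$, $\deg\cdot n=1$, $m\cdot n\geq 0$. In the complex $\mathcal{C}_{K_N^{\vee}-\deg,K_N,N}$ with basis elements indexed by $(m-\deg,n,P)$ where $m\in K_N^{\vee}\cap M$, $n\in K_N\cap N$, $m\cdot n=0$, and $P\in\Lambda^*(N_{\mathbb{C}})$, the differential term associated with $m_1\in\Delta$ acts by contraction of $P$ by $m_1$ and is nonzero only when $m_1\cdot n=0$, and the differential term associated with $n_1\in\Delta^{\vee}$ acts by wedging $P$ with $n_1$ and is nonzero only when $m\cdot n_1=0$; consequently the total differential squares to zero. -/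

import Mathlib

noncomputable section

open scoped Classical

/-- The pairing between the dual lattices `M = N = ℤ^d`. -/
def dotZ {d : ℕ} (m n : Fin d → ℤ) : ℤ := ∑ i, m i * n i

variable {d : ℕ}

/-- The exterior algebra `Λ^*(N_ℂ)`. -/
abbrev Lam (d : ℕ) := ExteriorAlgebra ℂ (Fin d → ℂ)

/-- Ambient module; the complex `𝒞_{K_N^∨ − deg, K_N, N}` is realized as the subspace
supported on pairs `(m, n)` (the basis element indexed by `(m − deg, n, P)`) with
`m ∈ K_N^∨`, `n ∈ K_N`, `m·n = 0`, and with values `P ∈ Λ^*(N_ℂ)`. -/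
abbrev Amb (d : ℕ) := ((Fin d → ℤ) × (Fin d → ℤ)) →₀ Lam d

/-- Admissibility: `m ∈ K_N^∨` (nonnegative pairing with the cone `K_N` generated by
`Δ^∨`), `n ∈ K_N`, and `m·n = 0`. -/
def AdmB (KN : AddSubmonoid (Fin d → ℤ)) (p : (Fin d → ℤ) × (Fin d → ℤ)) : Prop :=
  (∀ n ∈ KN, 0 ≤ dotZ p.1 n) ∧ p.2 ∈ KN ∧ dotZ p.1 p.2 = 0

/-- Reduction modulo the monomials `[m ⊕ n]` with `m·n > 0`. -/
def projB (KN : AddSubmonoid (Fin d → ℤ)) : Amb d →ₗ[ℂ] Amb d :=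
  Finsupp.lsum ℂ fun p => if AdmB KN p then (Finsupp.lsingle p : Lam d →ₗ[ℂ] Amb d) else 0

/-- Multiplication by the monomial `[a.1 ⊕ a.2]`. -/
def shiftB (a : (Fin d → ℤ) × (Fin d → ℤ)) : Amb d →ₗ[ℂ] Amb d :=
  Finsupp.lmapDomain (Lam d) ℂ (fun p => p + a)

/-- Exterior multiplication by `n₁ ∈ N` on the `Λ^*(N_ℂ)` factor. -/
def wedgeB (n₁ : Fin d → ℤ) : Amb d →ₗ[ℂ] Amb d :=
  Finsupp.mapRange.linearMap
    (LinearMap.mulLeft ℂ (ExteriorAlgebra.ι ℂ (fun i => (n₁ i : ℂ))))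

/-- Contraction by `m₁ ∈ M` (via the duality pairing) on the `Λ^*(N_ℂ)` factor. -/
def contrB (m₁ : Fin d → ℤ) : Amb d →ₗ[ℂ] Amb d :=
  Finsupp.mapRange.linearMap
    (CliffordAlgebra.contractLeft (Q := (0 : QuadraticForm ℂ (Fin d → ℂ)))
      (∑ i, (m₁ i : ℂ) • LinearMap.proj i))

/-- The differential
`d^B = ∑_{m₁ ∈ Δ} [m₁] ⊗ contr(m₁) + ∑_{n₁ ∈ Δ^∨} [n₁] ⊗ (∧ n₁)`. -/
def dB (KN : AddSubmonoid (Fin d → ℤ)) (Δ ΔV : Finset (Fin d → ℤ)) :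
    Amb d →ₗ[ℂ] Amb d :=
  (∑ m₁ ∈ Δ, projB KN ∘ₗ shiftB (m₁, 0) ∘ₗ contrB m₁) +
  (∑ n₁ ∈ ΔV, projB KN ∘ₗ shiftB (0, n₁) ∘ₗ wedgeB n₁)


lemma dotZ_add_left (a b c : Fin d → ℤ) : dotZ (a+b) c = dotZ a c + dotZ b c := by
  simp [dotZ, add_mul, Finset.sum_add_distrib]

lemma dotZ_add_right (a b c : Fin d → ℤ) : dotZ a (b+c) = dotZ a b + dotZ a c := by
  simp [dotZ, mul_add, Finset.sum_add_distrib]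

lemma dotZ_zero_right (a : Fin d → ℤ) : dotZ a 0 = 0 := by simp [dotZ]
lemma dotZ_zero_left (a : Fin d → ℤ) : dotZ 0 a = 0 := by simp [dotZ]

lemma dotZ_nonneg_closure {ΔV : Finset (Fin d → ℤ)} {m : Fin d → ℤ}
    (h : ∀ n ∈ ΔV, 0 ≤ dotZ m n) :
    ∀ n ∈ AddSubmonoid.closure (ΔV : Set (Fin d → ℤ)), 0 ≤ dotZ m n := by
  intro n hn
  induction hn using AddSubmonoid.closure_induction with
  | mem x hx => exact h x hx
  | zero => simp [dotZ_zero_right]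
  | add x y _ _ hx hy => rw [dotZ_add_right]; positivity

lemma projB_single (KN : AddSubmonoid (Fin d → ℤ)) (p) (w : Lam d) :
    projB KN (Finsupp.single p w) = if AdmB KN p then Finsupp.single p w else 0 := by
  simp only [projB, Finsupp.lsum_single]
  split <;> simp

lemma shiftB_single (a p : (Fin d → ℤ) × (Fin d → ℤ)) (w : Lam d) :
    shiftB a (Finsupp.single p w) = Finsupp.single (p+a) w := by
  simp [shiftB, Finsupp.mapDomain_single]

lemma mapRange_lin_single (g : Lam d →ₗ[ℂ] Lam d) (p : (Fin d → ℤ) × (Fin d → ℤ)) (w : Lam d) :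
    Finsupp.mapRange.linearMap g (Finsupp.single p w) = Finsupp.single p (g w) := by
  simp

/-- contraction functional -/
def Fm (m : Fin d → ℤ) : Lam d →ₗ[ℂ] Lam d :=
  CliffordAlgebra.contractLeft (Q := (0 : QuadraticForm ℂ (Fin d → ℂ)))
      (∑ i, (m i : ℂ) • LinearMap.proj i)

def Wn (n : Fin d → ℤ) : Lam d →ₗ[ℂ] Lam d :=
  LinearMap.mulLeft ℂ (ExteriorAlgebra.ι ℂ (fun i => (n i : ℂ)))

lemma fm_eval (m n : Fin d → ℤ) :
    (∑ i, (m i : ℂ) • LinearMap.proj i : (Fin d → ℂ) →ₗ[ℂ] ℂ) (fun i => (n i : ℂ))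
      = (dotZ m n : ℂ) := by
  simp [dotZ, LinearMap.sum_apply]

lemma Fm_comm (m m' : Fin d → ℤ) (w : Lam d) : Fm m (Fm m' w) = - Fm m' (Fm m w) :=
  CliffordAlgebra.contractLeft_comm _ _ _

lemma Fm_Wn (m n : Fin d → ℤ) (w : Lam d) :
    Fm m (Wn n w) + Wn n (Fm m w) = (dotZ m n : ℂ) • w := by
  have := CliffordAlgebra.contractLeft_ι_mul (Q := (0 : QuadraticForm ℂ (Fin d → ℂ)))
    (d := (∑ i, (m i : ℂ) • LinearMap.proj i)) (fun i => (n i : ℂ)) w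
  simp only [Fm, Wn, LinearMap.mulLeft_apply]
  rw [this, fm_eval]
  abel

lemma Wn_comm (n n' : Fin d → ℤ) (w : Lam d) : Wn n (Wn n' w) = - Wn n' (Wn n w) := by
  simp only [Wn, LinearMap.mulLeft_apply, ← mul_assoc]
  rw [show (ExteriorAlgebra.ι ℂ (fun i => (n i : ℂ)) * ExteriorAlgebra.ι ℂ (fun i => (n' i : ℂ)))
      = -(ExteriorAlgebra.ι ℂ (fun i => (n' i : ℂ)) * ExteriorAlgebra.ι ℂ (fun i => (n i : ℂ)))
    from eq_neg_of_add_eq_zero_left (ExteriorAlgebra.ι_add_mul_swap _ _), neg_mul]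
/-- A shift is "good" if its `M`-part pairs nonnegatively with `K_N` and its `N`-part lies in `K_N`. -/
def GoodB (KN : AddSubmonoid (Fin d → ℤ)) (a : (Fin d → ℤ) × (Fin d → ℤ)) : Prop :=
  (∀ n ∈ KN, 0 ≤ dotZ a.1 n) ∧ a.2 ∈ KN

lemma adm_step {KN : AddSubmonoid (Fin d → ℤ)} {p a b : (Fin d → ℤ) × (Fin d → ℤ)}
    (hp : AdmB KN p) (ha : GoodB KN a) (hb : GoodB KN b)
    (h : AdmB KN (p + a + b)) : AdmB KN (p + a) := by
  obtain ⟨hp1, hp2, hp3⟩ := hp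
  refine ⟨fun n hn => ?_, KN.add_mem hp2 ha.2, ?_⟩
  · have := hp1 n hn; have := ha.1 n hn
    simp only [Prod.fst_add, dotZ_add_left]; omega
  · have h9 := h.2.2
    simp only [Prod.fst_add, Prod.snd_add, dotZ_add_left, dotZ_add_right] at h9 ⊢
    have n1 : 0 ≤ dotZ p.1 a.2 := hp1 _ ha.2
    have n2 : 0 ≤ dotZ a.1 p.2 := ha.1 _ hp2
    have n3 : 0 ≤ dotZ a.1 a.2 := ha.1 _ ha.2
    have n4 : 0 ≤ dotZ p.1 b.2 := hp1 _ hb.2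
    have n5 : 0 ≤ dotZ a.1 b.2 := ha.1 _ hb.2
    have n6 : 0 ≤ dotZ b.1 p.2 := hb.1 _ hp2
    have n7 : 0 ≤ dotZ b.1 a.2 := hb.1 _ ha.2
    have n8 : 0 ≤ dotZ b.1 b.2 := hb.1 _ hb.2
    omega

lemma TT {KN : AddSubmonoid (Fin d → ℤ)} {p : (Fin d → ℤ) × (Fin d → ℤ)}
    (hp : AdmB KN p) {a b : (Fin d → ℤ) × (Fin d → ℤ)}
    (ha : GoodB KN a) (hb : GoodB KN b)
    (ga gb : Lam d →ₗ[ℂ] Lam d) (w : Lam d) :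
    (projB KN ∘ₗ shiftB b ∘ₗ Finsupp.mapRange.linearMap gb)
      ((projB KN ∘ₗ shiftB a ∘ₗ Finsupp.mapRange.linearMap ga) (Finsupp.single p w))
    = projB KN (Finsupp.single (p + a + b) (gb (ga w))) := by
  simp only [LinearMap.comp_apply, mapRange_lin_single, shiftB_single, projB_single]
  by_cases h : AdmB KN (p + a)
  · simp only [h, if_true, mapRange_lin_single, shiftB_single, projB_single]
  · have h2 : ¬ AdmB KN (p + a + b) := fun hh => h (adm_step hp ha hb hh)
    simp only [h, h2, if_false, map_zero]
lemma sum_skew_zero {α : Type*} {M : Type*} [AddCommGroup M] [Module ℂ M]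
    (s : Finset α) (g : α → α → M) (h : ∀ a b, g a b = - g b a) :
    ∑ a ∈ s, ∑ b ∈ s, g a b = 0 := by
  have h1 : (∑ a ∈ s, ∑ b ∈ s, g a b) = - ∑ a ∈ s, ∑ b ∈ s, g a b := by
    conv_lhs => rw [Finset.sum_congr rfl fun a _ => Finset.sum_congr rfl fun b _ => h a b]
    rw [Finset.sum_comm]
    simp
  have h2 : (2:ℂ) • (∑ a ∈ s, ∑ b ∈ s, g a b) = 0 := by
    rw [two_smul]; nth_rewrite 2 [h1]; exact add_neg_cancel _
  simpa using (smul_eq_zero.mp h2).resolve_left (by norm_num)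
lemma dB_dB_single {Δ ΔV : Finset (Fin d → ℤ)}
    (hpair : ∀ m ∈ Δ, ∀ n ∈ ΔV, 0 ≤ dotZ m n)
    {KN : AddSubmonoid (Fin d → ℤ)} (hKN : KN = AddSubmonoid.closure (ΔV : Set _))
    {p : (Fin d → ℤ) × (Fin d → ℤ)} (hp : AdmB KN p) (w : Lam d) :
    dB KN Δ ΔV (dB KN Δ ΔV (Finsupp.single p w)) = 0 := by
  have hgm : ∀ m ∈ Δ, GoodB KN (m, 0) := by
    intro m hm
    exact ⟨fun n hn => dotZ_nonneg_closure (hpair m hm) n (hKN ▸ hn), KN.zero_mem⟩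
  have hgn : ∀ n ∈ ΔV, GoodB KN (0, n) := by
    intro n hn
    exact ⟨fun n' _ => le_of_eq (dotZ_zero_left n').symm,
      hKN ▸ AddSubmonoid.subset_closure hn⟩
  have T1 : ∀ m₁ ∈ Δ, ∀ m₂ ∈ Δ,
      (projB KN ∘ₗ shiftB (m₂,0) ∘ₗ contrB m₂)
        ((projB KN ∘ₗ shiftB (m₁,0) ∘ₗ contrB m₁) (Finsupp.single p w))
      = projB KN (Finsupp.single (p+(m₁,0)+(m₂,0)) (Fm m₂ (Fm m₁ w))) :=
    fun m₁ h1 m₂ h2 => TT hp (hgm _ h1) (hgm _ h2) (Fm m₁) (Fm m₂) w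
  have T2 : ∀ n₁ ∈ ΔV, ∀ m₂ ∈ Δ,
      (projB KN ∘ₗ shiftB (m₂,0) ∘ₗ contrB m₂)
        ((projB KN ∘ₗ shiftB (0,n₁) ∘ₗ wedgeB n₁) (Finsupp.single p w))
      = projB KN (Finsupp.single (p+(0,n₁)+(m₂,0)) (Fm m₂ (Wn n₁ w))) :=
    fun n₁ h1 m₂ h2 => TT hp (hgn _ h1) (hgm _ h2) (Wn n₁) (Fm m₂) w
  have T3 : ∀ m₁ ∈ Δ, ∀ n₂ ∈ ΔV,
      (projB KN ∘ₗ shiftB (0,n₂) ∘ₗ wedgeB n₂)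
        ((projB KN ∘ₗ shiftB (m₁,0) ∘ₗ contrB m₁) (Finsupp.single p w))
      = projB KN (Finsupp.single (p+(m₁,0)+(0,n₂)) (Wn n₂ (Fm m₁ w))) :=
    fun m₁ h1 n₂ h2 => TT hp (hgm _ h1) (hgn _ h2) (Fm m₁) (Wn n₂) w
  have T4 : ∀ n₁ ∈ ΔV, ∀ n₂ ∈ ΔV,
      (projB KN ∘ₗ shiftB (0,n₂) ∘ₗ wedgeB n₂)
        ((projB KN ∘ₗ shiftB (0,n₁) ∘ₗ wedgeB n₁) (Finsupp.single p w))
      = projB KN (Finsupp.single (p+(0,n₁)+(0,n₂)) (Wn n₂ (Wn n₁ w))) :=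
    fun n₁ h1 n₂ h2 => TT hp (hgn _ h1) (hgn _ h2) (Wn n₁) (Wn n₂) w
  have EA : ∑ m₁ ∈ Δ,
      ((∑ m₂ ∈ Δ, (projB KN ∘ₗ shiftB (m₂,0) ∘ₗ contrB m₂)
          ((projB KN ∘ₗ shiftB (m₁,0) ∘ₗ contrB m₁) (Finsupp.single p w)))
        + ∑ n₂ ∈ ΔV, (projB KN ∘ₗ shiftB (0,n₂) ∘ₗ wedgeB n₂)
          ((projB KN ∘ₗ shiftB (m₁,0) ∘ₗ contrB m₁) (Finsupp.single p w)))
      = (∑ m₁ ∈ Δ, ∑ m₂ ∈ Δ,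
          projB KN (Finsupp.single (p+(m₁,0)+(m₂,0)) (Fm m₂ (Fm m₁ w))))
        + ∑ m₁ ∈ Δ, ∑ n₂ ∈ ΔV,
          projB KN (Finsupp.single (p+(m₁,0)+(0,n₂)) (Wn n₂ (Fm m₁ w))) := by
    rw [← Finset.sum_add_distrib]
    refine Finset.sum_congr rfl fun m₁ h1 => ?_
    congr 1
    · exact Finset.sum_congr rfl fun m₂ h2 => T1 m₁ h1 m₂ h2
    · exact Finset.sum_congr rfl fun n₂ h2 => T3 m₁ h1 n₂ h2
  have EB : ∑ n₁ ∈ ΔV,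
      ((∑ m₂ ∈ Δ, (projB KN ∘ₗ shiftB (m₂,0) ∘ₗ contrB m₂)
          ((projB KN ∘ₗ shiftB (0,n₁) ∘ₗ wedgeB n₁) (Finsupp.single p w)))
        + ∑ n₂ ∈ ΔV, (projB KN ∘ₗ shiftB (0,n₂) ∘ₗ wedgeB n₂)
          ((projB KN ∘ₗ shiftB (0,n₁) ∘ₗ wedgeB n₁) (Finsupp.single p w)))
      = (∑ n₁ ∈ ΔV, ∑ m₂ ∈ Δ,
          projB KN (Finsupp.single (p+(0,n₁)+(m₂,0)) (Fm m₂ (Wn n₁ w))))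
        + ∑ n₁ ∈ ΔV, ∑ n₂ ∈ ΔV,
          projB KN (Finsupp.single (p+(0,n₁)+(0,n₂)) (Wn n₂ (Wn n₁ w))) := by
    rw [← Finset.sum_add_distrib]
    refine Finset.sum_congr rfl fun n₁ h1 => ?_
    congr 1
    · exact Finset.sum_congr rfl fun m₂ h2 => T2 n₁ h1 m₂ h2
    · exact Finset.sum_congr rfl fun n₂ h2 => T4 n₁ h1 n₂ h2
  simp only [dB, LinearMap.add_apply, LinearMap.sum_apply, map_add, map_sum]
  rw [EA, EB]
  have hS1 : (∑ m₁ ∈ Δ, ∑ m₂ ∈ Δ,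
      projB KN (Finsupp.single (p+(m₁,0)+(m₂,0)) (Fm m₂ (Fm m₁ w)))) = 0 := by
    refine sum_skew_zero Δ _ fun a b => ?_
    rw [add_right_comm, Fm_comm, Finsupp.single_neg, map_neg]
  have hS4 : (∑ n₁ ∈ ΔV, ∑ n₂ ∈ ΔV,
      projB KN (Finsupp.single (p+(0,n₁)+(0,n₂)) (Wn n₂ (Wn n₁ w)))) = 0 := by
    refine sum_skew_zero ΔV _ fun a b => ?_
    rw [add_right_comm, Wn_comm, Finsupp.single_neg, map_neg]
  rw [hS1, hS4, zero_add, add_zero, Finset.sum_comm (s := ΔV) (t := Δ),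
      ← Finset.sum_add_distrib]
  refine Finset.sum_eq_zero fun m hm => ?_
  rw [← Finset.sum_add_distrib]
  refine Finset.sum_eq_zero fun n hn => ?_
  rw [show p+(0,n)+(m,0) = p+(m,0)+(0,n) from add_right_comm p (0,n) (m,0),
      ← map_add, ← Finsupp.single_add]
  have hmix : Wn n (Fm m w) + Fm m (Wn n w) = (dotZ m n : ℂ) • w := by
    rw [add_comm]; exact Fm_Wn m n w
  rw [hmix]
  rcases (hpair m hm n hn).lt_or_eq with hlt | heq
  · rw [projB_single, if_neg]
    intro hadm
    have hd := hadm.2.2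
    simp only [Prod.fst_add, Prod.snd_add, dotZ_add_left, dotZ_add_right,
      dotZ_zero_left, dotZ_zero_right] at hd
    have h1 : dotZ p.1 p.2 = 0 := hp.2.2
    have h2 : 0 ≤ dotZ p.1 n := hp.1 n (hKN ▸ AddSubmonoid.subset_closure hn)
    have h3 : 0 ≤ dotZ m p.2 := (hgm m hm).1 p.2 hp.2.1
    omega
  · rw [← heq]
    simp

/-- in the complex `𝒞_{K_N^∨ − deg, K_N, N}`, for a basis element indexed
by `(m − deg, n, P)` with `m ∈ K_N^∨`, `n ∈ K_N`, `m·n = 0`:  the differential term of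
`m₁ ∈ Δ` (which acts by contracting `P` by `m₁`) is nonzero only when `m₁·n = 0`, the
differential term of `n₁ ∈ Δ^∨` (which acts by wedging `P` with `n₁`) is nonzero only
when `m·n₁ = 0`, and the total differential squares to zero. -/
theorem stmt17 (deg degV : Fin d → ℤ) (Δ ΔV : Finset (Fin d → ℤ))
    (hΔ : ∀ m ∈ Δ, dotZ m degV = 1)
    (hΔV : ∀ n ∈ ΔV, dotZ deg n = 1)
    (hpair : ∀ m ∈ Δ, ∀ n ∈ ΔV, 0 ≤ dotZ m n)
    (KN : AddSubmonoid (Fin d → ℤ)) (hKN : KN = AddSubmonoid.closure (ΔV : Set _)) :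
    (∀ p : (Fin d → ℤ) × (Fin d → ℤ), AdmB KN p → ∀ m₁ ∈ Δ, ∀ w : Lam d,
      dotZ m₁ p.2 ≠ 0 →
        (projB KN ∘ₗ shiftB (m₁, 0) ∘ₗ contrB m₁) (Finsupp.single p w) = 0) ∧
    (∀ p : (Fin d → ℤ) × (Fin d → ℤ), AdmB KN p → ∀ n₁ ∈ ΔV, ∀ w : Lam d,
      dotZ p.1 n₁ ≠ 0 →
        (projB KN ∘ₗ shiftB (0, n₁) ∘ₗ wedgeB n₁) (Finsupp.single p w) = 0) ∧
    (∀ v ∈ Finsupp.supported (Lam d) ℂ {p | AdmB KN p},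
      dB KN Δ ΔV (dB KN Δ ΔV v) = 0) := by
  refine ⟨?_, ?_, ?_⟩
  · intro p hp m₁ _ w hne
    have e : (projB KN ∘ₗ shiftB (m₁, 0) ∘ₗ contrB m₁) (Finsupp.single p w)
        = projB KN (Finsupp.single (p + (m₁, 0)) (Fm m₁ w)) := by
      simp only [LinearMap.comp_apply, contrB, mapRange_lin_single, shiftB_single]
      rfl
    rw [e, projB_single, if_neg]
    intro hadm
    have hd := hadm.2.2
    simp only [Prod.fst_add, Prod.snd_add, dotZ_add_left, dotZ_add_right,
      dotZ_zero_left, dotZ_zero_right] at hd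
    have h1 : dotZ p.1 p.2 = 0 := hp.2.2
    omega
  · intro p hp n₁ _ w hne
    have e : (projB KN ∘ₗ shiftB (0, n₁) ∘ₗ wedgeB n₁) (Finsupp.single p w)
        = projB KN (Finsupp.single (p + (0, n₁)) (Wn n₁ w)) := by
      simp only [LinearMap.comp_apply, wedgeB, mapRange_lin_single, shiftB_single]
      rfl
    rw [e, projB_single, if_neg]
    intro hadm
    have hd := hadm.2.2
    simp only [Prod.fst_add, Prod.snd_add, dotZ_add_left, dotZ_add_right,
      dotZ_zero_left, dotZ_zero_right] at hd
    have h1 : dotZ p.1 p.2 = 0 := hp.2.2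
    omega
  · intro v hv
    rw [Finsupp.mem_supported] at hv
    conv_lhs => rw [← Finsupp.sum_single v, Finsupp.sum, map_sum, map_sum]
    refine Finset.sum_eq_zero fun p hps => ?_
    exact dB_dB_single hpair hKN (hv hps) (v p)

end
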